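/- Let p be an odd prime and K = F_{p^2}. For a ∈ F_p with a ≠ 0, the polynomial X^p + X - a splits into p distinct linear factors over K, and none of its roots lies in K_- = {α ∈ K : α^p = -α}. -/

import Mathlib

open Polynomial
open scoped Classical

private lemma stmt_4_aux_deg {K : Type*} [Field K] {p : ℕ} (hp2 : 2 ≤ p) (c d : K) :
    (X ^ p + C c * X - C d).natDegree = p := by
  compute_degree
  · simp [show p ≠ 1 by omega, show p ≠ 0 by omega]
  · omega
  · exact max_eq_left (by omega)

private lemma stmt_4_aux_ne {K : Type*} [Field K] {p : ℕ} (hp2 : 2 ≤ p) (c d : K) :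
    (X ^ p + C c * X - C d) ≠ 0 := by
  intro h0
  have := stmt_4_aux_deg (K := K) hp2 c d
  rw [h0] at this
  simp at this
  omega

private lemma stmt_4_aux_card {K : Type*} [Field K] {p : ℕ} (hp2 : 2 ≤ p) (c d : K) :
    (X ^ p + C c * X - C d).roots.toFinset.card ≤ p := by
  classical
  refine le_trans (Multiset.toFinset_card_le _) ?_
  refine le_trans (card_roots' _) ?_
  rw [stmt_4_aux_deg hp2 c d]

/-- For an odd prime `p`, `K = 𝔽_{p²}` and a nonzero `a ∈ 𝔽_p`, the polynomial
`X^p + X - a` splits into `p` distinct linear factors over `K` and none of its roots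
lies in `K₋ = {α : α^p = -α}`. -/
theorem stmt_4 (p : ℕ) [Fact p.Prime] (hodd : Odd p) (a : ZMod p) (ha : a ≠ 0) :
    (X ^ p + X - C (algebraMap (ZMod p) (GaloisField p 2) a)).Splits ∧
    (X ^ p + X - C (algebraMap (ZMod p) (GaloisField p 2) a)).roots.toFinset.card = p ∧
    ∀ η : GaloisField p 2,
      (X ^ p + X - C (algebraMap (ZMod p) (GaloisField p 2) a)).IsRoot η → η ^ p ≠ -η := by
  have hp := Fact.out (p := p.Prime)
  have hp2 : 2 ≤ p := hp.two_le
  set K := GaloisField p 2 with hK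
  have : Fintype K := Fintype.ofFinite K
  set a' : K := algebraMap (ZMod p) K a with ha'
  set f : K[X] := X ^ p + X - C a' with hf
  have hfform : f = X ^ p + C 1 * X - C a' := by rw [hf, map_one, one_mul]
  have hdeg : f.natDegree = p := by rw [hfform]; exact stmt_4_aux_deg hp2 1 a'
  have hf0 : f ≠ 0 := by rw [hfform]; exact stmt_4_aux_ne hp2 1 a'
  have heval : ∀ x : K, f.eval x = x ^ p + x - a' := by intro x; simp [hf]
  have hcardK : Fintype.card K = p ^ 2 := by
    rw [← Nat.card_eq_fintype_card]; exact GaloisField.card p 2 (by norm_num)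
  have hpow2 : ∀ x : K, x ^ p ^ 2 = x := by
    intro x; rw [← hcardK]; exact FiniteField.pow_card x
  -- the prime field as a finset
  set S : Finset K := Finset.univ.image (algebraMap (ZMod p) K) with hS
  have hScard : S.card = p := by
    rw [hS, Finset.card_image_of_injective _ (algebraMap (ZMod p) K).injective,
      Finset.card_univ, ZMod.card]
  have hSfix : ∀ x ∈ S, x ^ p = x := by
    intro x hx
    simp only [hS, Finset.mem_image] at hx
    obtain ⟨b, -, rfl⟩ := hx
    rw [← map_pow, ZMod.pow_card]
  have hmemS : ∀ x : K, x ∈ S ↔ x ^ p = x := by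
    intro x
    refine ⟨hSfix x, fun hx => ?_⟩
    have hgform : (X ^ p - X : K[X]) = X ^ p + C (-1) * X - C 0 := by
      rw [map_neg, map_one, map_zero]; ring
    have hg0 : (X ^ p - X : K[X]) ≠ 0 := by rw [hgform]; exact stmt_4_aux_ne hp2 _ _
    have hsub : S ⊆ (X ^ p - X : K[X]).roots.toFinset := by
      intro y hy
      rw [Multiset.mem_toFinset, mem_roots hg0]
      simp [IsRoot, sub_eq_zero, hSfix y hy]
    have hcardle : (X ^ p - X : K[X]).roots.toFinset.card ≤ p := by
      rw [hgform]; exact stmt_4_aux_card hp2 _ _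
    have hEq : S = (X ^ p - X : K[X]).roots.toFinset :=
      Finset.eq_of_subset_of_card_le hsub (by omega)
    rw [hEq, Multiset.mem_toFinset, mem_roots hg0]
    simp [IsRoot, sub_eq_zero, hx]
  -- the additive map x ↦ x^p + x
  set φ : K →+ K :=
    { toFun := fun x => x ^ p + x
      map_zero' := by simp [zero_pow hp.ne_zero]
      map_add' := fun x y => by rw [add_pow_char]; ring } with hφ
  have hφapp : ∀ x : K, φ x = x ^ p + x := fun x => rfl
  -- range of φ lies in the prime field
  have hrangeS : ∀ x : K, φ x ∈ S := by
    intro x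
    rw [hmemS, hφapp]
    rw [add_pow_char, ← pow_mul, show p * p = p ^ 2 by ring, hpow2, add_comm]
  -- kernel finset
  have hhform : (X ^ p + X : K[X]) = X ^ p + C 1 * X - C 0 := by
    rw [map_one, map_zero, one_mul, sub_zero]
  have hh0 : (X ^ p + X : K[X]) ≠ 0 := by rw [hhform]; exact stmt_4_aux_ne hp2 _ _
  set Rker : Finset K := (X ^ p + X : K[X]).roots.toFinset with hRker
  have hmemRker : ∀ x : K, x ∈ Rker ↔ x ^ p + x = 0 := by
    intro x
    rw [hRker, Multiset.mem_toFinset, mem_roots hh0]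
    simp [IsRoot]
  have hRkerle : Rker.card ≤ p := by
    rw [hRker, hhform]; exact stmt_4_aux_card hp2 _ _
  -- image finset
  set Rimg : Finset K := Finset.univ.image φ with hRimg
  have hRimgS : Rimg ⊆ S := by
    intro y hy
    simp only [hRimg, Finset.mem_image] at hy
    obtain ⟨x, -, rfl⟩ := hy
    exact hrangeS x
  have hRimgle : Rimg.card ≤ p := hScard ▸ Finset.card_le_card hRimgS
  -- counting
  have hkercard : Nat.card φ.ker = Rker.card := by
    have h1 : (φ.ker : Set K) = ↑Rker := by
      ext x
      simp only [SetLike.mem_coe, AddMonoidHom.mem_ker, Finset.mem_coe, hmemRker, hφapp]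
    calc Nat.card φ.ker = (φ.ker : Set K).ncard := Nat.card_coe_set_eq _
      _ = Rker.card := by rw [h1, Set.ncard_coe_finset]
  have hrangecard : Nat.card φ.range = Rimg.card := by
    have h1 : (φ.range : Set K) = ↑Rimg := by
      rw [hRimg, Finset.coe_image, Finset.coe_univ, Set.image_univ]
      exact AddMonoidHom.coe_range φ
    calc Nat.card φ.range = (φ.range : Set K).ncard := Nat.card_coe_set_eq _
      _ = Rimg.card := by rw [h1, Set.ncard_coe_finset]
  have hmul : Rimg.card * Rker.card = p ^ 2 := by
    have h1 : Nat.card K = Nat.card (K ⧸ φ.ker) * Nat.card φ.ker :=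
      AddSubgroup.card_eq_card_quotient_mul_card_addSubgroup _
    have h2 : Nat.card (K ⧸ φ.ker) = Nat.card φ.range :=
      Nat.card_congr (QuotientAddGroup.quotientKerEquivRange φ).toEquiv
    rw [h2, hkercard, hrangecard] at h1
    rw [← h1, Nat.card_eq_fintype_card, hcardK]
  have hple : 0 < p := hp.pos
  have hRkercard : Rker.card = p := by
    refine le_antisymm hRkerle (Nat.le_of_mul_le_mul_left ?_ hple)
    calc p * p = Rimg.card * Rker.card := by rw [hmul]; ring
      _ ≤ p * Rker.card := Nat.mul_le_mul_right _ hRimgle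
  have hRimgcard : Rimg.card = p := by
    refine le_antisymm hRimgle (Nat.le_of_mul_le_mul_right ?_ hple)
    calc p * p = Rimg.card * Rker.card := by rw [hmul]; ring
      _ ≤ Rimg.card * p := Nat.mul_le_mul_left _ hRkerle
  -- surjectivity onto the prime field: get a root α of f
  have hRimgeq : Rimg = S := Finset.eq_of_subset_of_card_le hRimgS (by omega)
  have ha'S : a' ∈ S := by
    rw [hS]; exact Finset.mem_image_of_mem _ (Finset.mem_univ a)
  obtain ⟨α, -, hα⟩ : ∃ x ∈ Finset.univ, φ x = a' := by
    have := hRimgeq ▸ ha'S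
    simpa only [hRimg, Finset.mem_image] using this
  have hαa : α ^ p + α = a' := by rw [← hφapp, hα]
  -- the roots of f
  have hroots_eq : f.roots.toFinset = Rker.image (· + α) := by
    ext x
    simp only [Multiset.mem_toFinset, mem_roots hf0, Finset.mem_image, IsRoot, heval]
    constructor
    · intro hx
      refine ⟨x - α, ?_, by ring⟩
      rw [hmemRker, sub_pow_char]
      have hxe : x ^ p + x = a' := by linear_combination hx
      rw [← hαa] at hxe
      linear_combination hxe
    · rintro ⟨y, hy, rfl⟩
      rw [hmemRker] at hy
      rw [add_pow_char]
      linear_combination hy + hαa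
  have hcard : f.roots.toFinset.card = p := by
    rw [hroots_eq, Finset.card_image_of_injective _ (add_left_injective α), hRkercard]
  have hsplits : f.Splits := by
    rw [splits_iff_card_roots, hdeg]
    have h1 : Multiset.card f.roots ≤ p := le_trans f.card_roots' (le_of_eq hdeg)
    have h2 : p ≤ Multiset.card f.roots :=
      le_trans (le_of_eq hcard.symm) (Multiset.toFinset_card_le _)
    omega
  refine ⟨hsplits, hcard, fun η hη hcontra => ?_⟩
  rw [IsRoot, heval, hcontra] at hη
  have ha0 : a' = 0 := by linear_combination -hη
  refine ha ((algebraMap (ZMod p) K).injective ?_)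
  rw [← ha', ha0, map_zero]
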